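/- arXiv:1704.05451 — 3 statements merged into one kernel-verified Lean document; each statement's English description precedes it below -/
import Mathlib

section
/- For all integers k ≥ 2 and m ≥ 1, the half-range Hermite integrals satisfy the recursion S*(k, m) = (k − 1)·S*(k−2, m) + m·S*(k−1, m−1). -/
open Polynomial MeasureTheory

/-- Probabilists' Hermite polynomials: He₀ = 1, He₁ = x,
    He_{n+1} = x·He_n − n·He_{n−1}. -/
noncomputable def He : ℕ → Polynomial ℝ
  | 0 => 1
  | 1 => Polynomial.X
  | (n + 2) => Polynomial.X * He (n + 1) - Polynomial.C ((n : ℝ) + 1) * He n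

/-- Half-range Hermite integral S*(k,m) = ∫₀^∞ ξ^k He_m(ξ) e^{−ξ²/2} dξ. -/
noncomputable def Sstar (k m : ℕ) : ℝ :=
  ∫ x in Set.Ioi (0 : ℝ), x ^ k * (He m).eval x * Real.exp (-x ^ 2 / 2)

lemma He_zero : He 0 = 1 := rfl
lemma He_one : He 1 = X := rfl
lemma He_succ (n : ℕ) : He (n + 2) = X * He (n + 1) - C ((n : ℝ) + 1) * He n := rfl

lemma He_deriv : ∀ n : ℕ, derivative (He (n + 1)) = C ((n : ℝ) + 1) * He n
  | 0 => by rw [He_one, He_zero]; simp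
  | 1 => by
      rw [show (1 + 1 : ℕ) = 0 + 2 from rfl, He_succ 0, He_one, He_zero]
      simp
      ring
  | (n + 2) => by
      have ih1 := He_deriv (n + 1)
      have ih0 := He_deriv n
      rw [show n + 2 + 1 = (n + 1) + 2 from rfl, He_succ (n + 1), derivative_sub,
        derivative_mul, derivative_mul, derivative_X, derivative_C, ih1, ih0, He_succ n]
      push_cast
      simp only [map_add, map_one, map_ofNat]
      ring

lemma gauss_hasDerivAt (x : ℝ) :
    HasDerivAt (fun y : ℝ => Real.exp (-y ^ 2 / 2)) (-x * Real.exp (-x ^ 2 / 2)) x := by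
  have h : HasDerivAt (fun y : ℝ => -y ^ 2 / 2) (-x) x := by
    have := ((hasDerivAt_pow 2 x).neg.div_const 2)
    refine this.congr_deriv ?_
    norm_num
    ring
  simpa [mul_comm] using h.exp

lemma gauss_continuous : Continuous (fun y : ℝ => Real.exp (-y ^ 2 / 2)) :=
  Real.continuous_exp.comp (((continuous_pow 2).neg).div_const 2)

lemma poly_gauss_hasDerivAt (Q : Polynomial ℝ) (x : ℝ) :
    HasDerivAt (fun y : ℝ => Q.eval y * Real.exp (-y ^ 2 / 2))
      ((derivative Q - X * Q).eval x * Real.exp (-x ^ 2 / 2)) x := by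
  have h := (Q.hasDerivAt x).mul (gauss_hasDerivAt x)
  refine h.congr_deriv ?_
  simp
  ring

lemma integrableOn_poly_gauss (P : Polynomial ℝ) :
    IntegrableOn (fun x : ℝ => P.eval x * Real.exp (-x ^ 2 / 2)) (Set.Ioi 0) := by
  induction P using Polynomial.induction_on' with
  | add p q hp hq =>
      exact IntegrableOn.congr_fun (hp.add hq) (fun x _ => by simp; ring) measurableSet_Ioi
  | monomial n c =>
      have h : IntegrableOn (fun x : ℝ => x ^ (n : ℝ) * Real.exp (-(1/2 : ℝ) * x ^ 2))
          (Set.Ioi 0) :=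
        integrableOn_rpow_mul_exp_neg_mul_sq (by norm_num)
          (lt_of_lt_of_le neg_one_lt_zero (Nat.cast_nonneg n))
      have h2 := h.const_mul c
      refine IntegrableOn.congr_fun h2 (fun x hx => ?_) measurableSet_Ioi
      rw [Set.mem_Ioi] at hx
      rw [Real.rpow_natCast]
      simp
      ring

lemma tendsto_poly_gauss (P : Polynomial ℝ) :
    Filter.Tendsto (fun x : ℝ => P.eval x * Real.exp (-x ^ 2 / 2)) Filter.atTop (nhds 0) := by
  induction P using Polynomial.induction_on' with
  | add p q hp hq =>
      have := hp.add hq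
      simpa [add_mul] using this
  | monomial n c =>
      have hg : Filter.Tendsto (fun x : ℝ => |c| * (x ^ n * Real.exp (-x)))
          Filter.atTop (nhds (|c| * 0)) :=
        (Real.tendsto_pow_mul_exp_neg_atTop_nhds_zero n).const_mul |c|
      rw [mul_zero] at hg
      refine squeeze_zero_norm' ?_ hg
      filter_upwards [Filter.eventually_ge_atTop (2 : ℝ)] with x hx
      have hx0 : (0 : ℝ) ≤ x := by linarith
      have hexp : Real.exp (-x ^ 2 / 2) ≤ Real.exp (-x) := by
        apply Real.exp_le_exp.2
        nlinarith
      simp only [eval_monomial]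
      rw [norm_mul, norm_mul]
      have h1 : ‖x ^ n‖ = x ^ n := by
        rw [Real.norm_eq_abs, abs_of_nonneg (by positivity)]
      have h2 : ‖Real.exp (-x ^ 2 / 2)‖ = Real.exp (-x ^ 2 / 2) := by
        rw [Real.norm_eq_abs, abs_of_nonneg (Real.exp_pos _).le]
      rw [h1, h2, Real.norm_eq_abs, mul_assoc]
      gcongr

lemma integral_poly_gauss_deriv (Q : Polynomial ℝ) (h0 : Q.eval 0 = 0) :
    ∫ x in Set.Ioi (0 : ℝ), (derivative Q - X * Q).eval x * Real.exp (-x ^ 2 / 2) = 0 := by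
  have hc : ContinuousWithinAt (fun x : ℝ => Q.eval x * Real.exp (-x ^ 2 / 2))
      (Set.Ici 0) 0 :=
    ((Q.continuous).mul gauss_continuous).continuousWithinAt
  have := integral_Ioi_of_hasDerivAt_of_tendsto (a := 0) (m := 0) hc
    (fun x _ => poly_gauss_hasDerivAt Q x) (integrableOn_poly_gauss _)
    (tendsto_poly_gauss Q)
  rw [this, h0]
  simp

/-- Recursion S*(k,m) = (k−1)·S*(k−2,m) + m·S*(k−1,m−1) for k ≥ 2, m ≥ 1. -/
theorem sstar_recursion (k m : ℕ) (hk : 2 ≤ k) (hm : 1 ≤ m) :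
    Sstar k m = (k - 1 : ℝ) * Sstar (k - 2) m + (m : ℝ) * Sstar (k - 1) (m - 1) := by
  obtain ⟨a, rfl⟩ : ∃ a, k = a + 2 := ⟨k - 2, by omega⟩
  obtain ⟨b, rfl⟩ : ∃ b, m = b + 1 := ⟨m - 1, by omega⟩
  set Q : Polynomial ℝ := X ^ (a + 1) * He (b + 1) with hQ
  have h0 : Q.eval 0 = 0 := by simp [hQ]
  have key := integral_poly_gauss_deriv Q h0
  have hDQ : derivative Q - X * Q =
      C ((a : ℝ) + 1) * (X ^ a * He (b + 1)) + C ((b : ℝ) + 1) * (X ^ (a + 1) * He b)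
        - X ^ (a + 2) * He (b + 1) := by
    rw [hQ, derivative_mul, derivative_X_pow, He_deriv b, Nat.add_sub_cancel]
    push_cast
    ring
  have int1 : IntegrableOn (fun x : ℝ => x ^ a * (He (b + 1)).eval x * Real.exp (-x ^ 2 / 2))
      (Set.Ioi 0) := by
    have := integrableOn_poly_gauss (X ^ a * He (b + 1))
    exact IntegrableOn.congr_fun this (fun x _ => by simp) measurableSet_Ioi
  have int2 : IntegrableOn
      (fun x : ℝ => x ^ (a + 1) * (He b).eval x * Real.exp (-x ^ 2 / 2)) (Set.Ioi 0) := by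
    have := integrableOn_poly_gauss (X ^ (a + 1) * He b)
    exact IntegrableOn.congr_fun this (fun x _ => by simp) measurableSet_Ioi
  have int3 : IntegrableOn
      (fun x : ℝ => x ^ (a + 2) * (He (b + 1)).eval x * Real.exp (-x ^ 2 / 2)) (Set.Ioi 0) := by
    have := integrableOn_poly_gauss (X ^ (a + 2) * He (b + 1))
    exact IntegrableOn.congr_fun this (fun x _ => by simp) measurableSet_Ioi
  have int1c : IntegrableOn
      (fun x : ℝ => ((a : ℝ) + 1) * (x ^ a * (He (b + 1)).eval x * Real.exp (-x ^ 2 / 2)))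
      (Set.Ioi 0) := int1.const_mul _
  have int2c : IntegrableOn
      (fun x : ℝ => ((b : ℝ) + 1) * (x ^ (a + 1) * (He b).eval x * Real.exp (-x ^ 2 / 2)))
      (Set.Ioi 0) := int2.const_mul _
  have int12 : IntegrableOn
      (fun x : ℝ => ((a : ℝ) + 1) * (x ^ a * (He (b + 1)).eval x * Real.exp (-x ^ 2 / 2)) +
        ((b : ℝ) + 1) * (x ^ (a + 1) * (He b).eval x * Real.exp (-x ^ 2 / 2)))
      (Set.Ioi 0) := int1c.add int2c
  have expand : (fun x : ℝ => (derivative Q - X * Q).eval x * Real.exp (-x ^ 2 / 2)) =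
      fun x : ℝ => (((a : ℝ) + 1) * (x ^ a * (He (b + 1)).eval x * Real.exp (-x ^ 2 / 2)) +
        ((b : ℝ) + 1) * (x ^ (a + 1) * (He b).eval x * Real.exp (-x ^ 2 / 2))) -
        x ^ (a + 2) * (He (b + 1)).eval x * Real.exp (-x ^ 2 / 2) := by
    funext x
    rw [hDQ]
    simp
    ring
  rw [expand, integral_sub int12 int3, integral_add int1c int2c,
    integral_const_mul, integral_const_mul] at key
  have hS1 : Sstar a (b + 1) = ∫ x in Set.Ioi (0:ℝ),
      x ^ a * (He (b + 1)).eval x * Real.exp (-x ^ 2 / 2) := rfl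
  have hS2 : Sstar (a + 1) b = ∫ x in Set.Ioi (0:ℝ),
      x ^ (a + 1) * (He b).eval x * Real.exp (-x ^ 2 / 2) := rfl
  have hS3 : Sstar (a + 2) (b + 1) = ∫ x in Set.Ioi (0:ℝ),
      x ^ (a + 2) * (He (b + 1)).eval x * Real.exp (-x ^ 2 / 2) := rfl
  have ha2 : a + 2 - 2 = a := by omega
  have ha1 : a + 2 - 1 = a + 1 := by omega
  have hb1 : b + 1 - 1 = b := by omega
  rw [ha2, ha1, hb1, hS1, hS2, hS3]
  push_cast
  linarith [key]
end

section
/- For all integers k ≥ 0 and m ≥ 0 with m ≤ k: if k − m is even then S*(k, m) = √(2π)·A for some algebraic real number A, and if k − m is odd then S*(k, m) is an algebraic real number. -/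
open Polynomial MeasureTheory Real

lemma He_natDegree : ∀ n, (He n).natDegree ≤ n := by
  intro n
  induction n using Nat.twoStepInduction with
  | zero => simp [He]
  | one => simp [He]
  | more n ih1 ih2 =>
    rw [He]
    refine (natDegree_sub_le _ _).trans (max_le ?_ ?_)
    · exact (natDegree_mul_le).trans (by simp only [natDegree_X]; omega)
    · exact (natDegree_mul_le).trans
        (by simp only [natDegree_C, zero_add]; exact ih1.trans (by omega))

/-- Rational-coefficient Hermite polynomials. -/
noncomputable def Heq : ℕ → Polynomial ℚ
  | 0 => 1
  | 1 => Polynomial.X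
  | (n + 2) => Polynomial.X * Heq (n + 1) - Polynomial.C ((n : ℚ) + 1) * Heq n

lemma He_eq_map : ∀ n, He n = (Heq n).map (algebraMap ℚ ℝ) := by
  intro n
  induction n using Nat.twoStepInduction with
  | zero => simp [He, Heq]
  | one => simp [He, Heq]
  | more n ih1 ih2 =>
    rw [He, Heq, Polynomial.map_sub, Polynomial.map_mul, Polynomial.map_mul,
      Polynomial.map_X, Polynomial.map_C, ih1, ih2]
    norm_num

lemma He_coeff_parity : ∀ n i, Odd (n + i) → (He n).coeff i = 0 := by
  intro n
  induction n using Nat.twoStepInduction with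
  | zero =>
    intro i hi
    rw [He, Polynomial.coeff_one]
    simp only [zero_add] at hi
    have hne : i ≠ 0 := by rintro rfl; simp at hi
    simp [hne]
  | one =>
    intro i hi
    rw [He, Polynomial.coeff_X]
    have : i ≠ 1 := by rintro rfl; have := Nat.odd_iff.mp hi; omega
    simp [Ne.symm this]
  | more n ih1 ih2 =>
    intro i hi
    rw [He, Polynomial.coeff_sub, Polynomial.coeff_C_mul]
    cases i with
    | zero =>
      rw [Polynomial.mul_coeff_zero, Polynomial.coeff_X_zero, zero_mul,
        ih1 0 (by rcases hi with ⟨t, ht⟩; exact ⟨t-1, by omega⟩)]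
      ring
    | succ j =>
      rw [Polynomial.coeff_X_mul,
        ih2 j (by rcases hi with ⟨t, ht⟩; exact ⟨t-1, by omega⟩),
        ih1 (j+1) (by rcases hi with ⟨t, ht⟩; exact ⟨t-1, by omega⟩)]
      ring

noncomputable def Mom (n : ℕ) : ℝ :=
  ∫ x in Set.Ioi (0 : ℝ), x ^ n * Real.exp (-x ^ 2 / 2)

lemma Mom_closed (n : ℕ) :
    Mom n = (1/2 : ℝ) ^ (-((n : ℝ) + 1)/2) * (1/2) * Real.Gamma (((n : ℝ) + 1)/2) := by
  have h := integral_rpow_mul_exp_neg_mul_rpow (p := 2) (q := (n : ℝ)) (b := 1/2)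
    (by norm_num) (by exact_mod_cast neg_one_lt_zero.trans_le (Nat.cast_nonneg n)) (by norm_num)
  rw [Mom, ← h]
  refine setIntegral_congr_fun measurableSet_Ioi (fun x hx => ?_)
  have h1 : x ^ ((n:ℝ)) = x ^ n := Real.rpow_natCast x n
  have h2 : x ^ ((2:ℝ)) = x ^ (2:ℕ) := by
    rw [show ((2:ℝ)) = ((2:ℕ):ℝ) by norm_num, Real.rpow_natCast]
  rw [h1, h2, show -x^2/2 = -(1/2) * x^2 by ring]

lemma Mom_zero : Mom 0 = Real.sqrt (2 * Real.pi) * (1/2 : ℝ) := by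
  rw [Mom_closed]
  norm_num
  rw [one_div,
    Real.inv_rpow (by norm_num), ← Real.rpow_neg (by norm_num), neg_neg,
    Real.sqrt_eq_rpow, Real.sqrt_eq_rpow, show (1/2:ℝ) = 2⁻¹ by norm_num]
  ring_nf
  rw [Real.Gamma_one_half_eq, Real.sqrt_eq_rpow]

lemma Mom_one : Mom 1 = 1 := by
  rw [Mom_closed, show (-(((1:ℕ):ℝ) + 1)/2) = (-1:ℝ) by push_cast; norm_num,
    show ((((1:ℕ):ℝ) + 1)/2) = 1 by push_cast; norm_num, Real.rpow_neg_one, Real.Gamma_one]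
  norm_num

lemma Mom_rec (n : ℕ) : Mom (n + 2) = ((n : ℝ) + 1) * Mom n := by
  rw [Mom_closed, Mom_closed]
  push_cast
  have h2 : ((n : ℝ) + 1)/2 ≠ 0 := by positivity
  rw [show ((n : ℝ) + 2 + 1)/2 = ((n : ℝ) + 1)/2 + 1 by ring, Real.Gamma_add_one h2]
  rw [show (-((n:ℝ) + 2 + 1)/2) = (-((n : ℝ) + 1)/2) + (-1 : ℝ) by ring,
    Real.rpow_add (by norm_num), Real.rpow_neg_one]
  norm_num
  ring

lemma Mom_integrable (n : ℕ) :
    IntegrableOn (fun x : ℝ => x ^ n * Real.exp (-x ^ 2 / 2)) (Set.Ioi 0) := by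
  have h := integrableOn_rpow_mul_exp_neg_mul_sq (b := (1/2:ℝ)) (by norm_num)
    (s := (n:ℝ)) (by exact_mod_cast neg_one_lt_zero.trans_le (Nat.cast_nonneg n))
  refine h.congr_fun (fun x hx => ?_) measurableSet_Ioi
  beta_reduce
  rw [Real.rpow_natCast, show -(1/2:ℝ) * x^2 = -x^2/2 by ring]

lemma Mom_key (n : ℕ) :
    (Even n → ∃ q : ℚ, Mom n = Real.sqrt (2 * Real.pi) * q) ∧
    (Odd n → ∃ q : ℚ, Mom n = q) := by
  induction n using Nat.twoStepInduction with
  | zero =>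
    refine ⟨fun _ => ⟨1/2, by rw [Mom_zero]; norm_num⟩, fun h => absurd h (by simp)⟩
  | one =>
    refine ⟨fun h => absurd h (by simp), fun _ => ⟨1, by rw [Mom_one]; norm_num⟩⟩
  | more n ih1 ih2 =>
    constructor
    · intro hev
      have hn : Even n := by have := Nat.even_iff.mp hev; rw [Nat.even_iff]; omega
      obtain ⟨q, hq⟩ := ih1.1 hn
      refine ⟨(n+1) * q, ?_⟩
      rw [Mom_rec, hq]; push_cast; ring
    · intro hodd
      have hn : Odd n := by have := Nat.odd_iff.mp hodd; rw [Nat.odd_iff]; omega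
      obtain ⟨q, hq⟩ := ih1.2 hn
      refine ⟨(n+1) * q, ?_⟩
      rw [Mom_rec, hq]; push_cast; ring

lemma He_coeff_cast (m i : ℕ) : (He m).coeff i = ((Heq m).coeff i : ℝ) := by
  rw [He_eq_map m, Polynomial.coeff_map, eq_ratCast]

lemma Sstar_eq (k m : ℕ) :
    Sstar k m = ∑ i ∈ Finset.range (m+1), ((Heq m).coeff i : ℝ) * Mom (k+i) := by
  have hdeg : (He m).natDegree < m + 1 := Nat.lt_succ_of_le (He_natDegree m)
  calc Sstar k m = ∫ x in Set.Ioi (0:ℝ), ∑ i ∈ Finset.range (m+1),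
        ((Heq m).coeff i : ℝ) * (x^(k+i) * Real.exp (-x^2/2)) := by
        rw [Sstar]
        refine setIntegral_congr_fun measurableSet_Ioi (fun x hx => ?_)
        rw [Polynomial.eval_eq_sum_range' hdeg, Finset.mul_sum, Finset.sum_mul]
        refine Finset.sum_congr rfl fun i _ => ?_
        rw [He_coeff_cast, pow_add]; ring
    _ = ∑ i ∈ Finset.range (m+1), ∫ x in Set.Ioi (0:ℝ),
        ((Heq m).coeff i : ℝ) * (x^(k+i) * Real.exp (-x^2/2)) :=
        integral_finset_sum _ (fun i _ => (Mom_integrable (k+i)).const_mul _)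
    _ = ∑ i ∈ Finset.range (m+1), ((Heq m).coeff i : ℝ) * Mom (k+i) := by
        refine Finset.sum_congr rfl fun i _ => ?_
        rw [integral_const_mul, Mom]

lemma ratCast_isAlgebraic (q : ℚ) : IsAlgebraic ℚ ((q : ℝ)) :=
  (eq_ratCast (algebraMap ℚ ℝ) q) ▸ isAlgebraic_algebraMap q

lemma Heq_coeff_ne_even {m i : ℕ} (hc : (Heq m).coeff i ≠ 0) : Even (m + i) := by
  by_contra hodd
  refine hc ?_
  have h0 : (He m).coeff i = 0 := He_coeff_parity m i (Nat.not_even_iff_odd.mp hodd)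
  rw [He_coeff_cast] at h0
  exact_mod_cast h0

/-- For m ≤ k: if k − m is even then S*(k,m) = √(2π)·A with A algebraic;
    if k − m is odd then S*(k,m) is algebraic. -/
theorem sstar_structure (k m : ℕ) (hmk : m ≤ k) :
    (Even (k - m) → ∃ A : ℝ, IsAlgebraic ℚ A ∧
      Sstar k m = Real.sqrt (2 * Real.pi) * A) ∧
    (Odd (k - m) → IsAlgebraic ℚ (Sstar k m)) := by
  constructor
  · intro hev
    have key : Sstar k m ∈ Submodule.span ℚ {Real.sqrt (2 * Real.pi)} := by
      rw [Sstar_eq]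
      refine Submodule.sum_mem _ fun i hi => ?_
      by_cases hc : (Heq m).coeff i = 0
      · rw [hc]; norm_num
      · have hmi := Heq_coeff_ne_even hc
        have hki : Even (k + i) := by
          have h1 := Nat.even_iff.mp hev
          have h2 := Nat.even_iff.mp hmi
          rw [Nat.even_iff]; omega
        obtain ⟨q, hq⟩ := (Mom_key (k+i)).1 hki
        rw [hq, show ((Heq m).coeff i : ℝ) * (Real.sqrt (2*Real.pi) * q)
          = ((Heq m).coeff i * q : ℚ) • Real.sqrt (2*Real.pi) by
            rw [Rat.smul_def]; push_cast; ring]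
        exact Submodule.smul_mem _ _ (Submodule.mem_span_singleton_self _)
    rw [Submodule.mem_span_singleton] at key
    obtain ⟨q, hq⟩ := key
    exact ⟨(q:ℝ), ratCast_isAlgebraic q, by rw [← hq, Rat.smul_def]; ring⟩
  · intro hodd
    have key : Sstar k m ∈ Submodule.span ℚ {(1:ℝ)} := by
      rw [Sstar_eq]
      refine Submodule.sum_mem _ fun i hi => ?_
      by_cases hc : (Heq m).coeff i = 0
      · rw [hc]; norm_num
      · have hmi := Heq_coeff_ne_even hc
        have hki : Odd (k + i) := by
          have h1 := Nat.odd_iff.mp hodd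
          have h2 := Nat.even_iff.mp hmi
          rw [Nat.odd_iff]; omega
        obtain ⟨q, hq⟩ := (Mom_key (k+i)).2 hki
        rw [hq, show ((Heq m).coeff i : ℝ) * (q:ℝ)
          = ((Heq m).coeff i * q : ℚ) • (1:ℝ) by rw [Rat.smul_def]; push_cast; ring]
        exact Submodule.smul_mem _ _ (Submodule.mem_span_singleton_self _)
    rw [Submodule.mem_span_singleton] at key
    obtain ⟨q, hq⟩ := key
    rw [← hq, Rat.smul_def, mul_one]
    exact ratCast_isAlgebraic q
end

section
/- Let n ≥ 1, let A be a real n×n matrix which is real-diagonalizable, A = R·Λ·R⁻¹ with R invertible and Λ = diag(λ_1, ..., λ_n) real diagonal, and let Kn > 0. Suppose V : [0, ∞) → ℝⁿ is differentiable, satisfies A·V′(y) = −(1/Kn)·V(y) for all y ≥ 0, and is bounded on [0, ∞). Then, writing c = R⁻¹·V(0) and letting r_i denote the i-th column of R, one has c_i = 0 for every index i with λ_i ≤ 0, and for all y ≥ 0, V(y) = Σ_{i : λ_i > 0} c_i · exp(−y/(Kn·λ_i)) · r_i. -/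
open Matrix Set
open scoped BigOperators

lemma scalar_ode_exp (f g : ℝ → ℝ) (a : ℝ)
    (hd : ∀ y ∈ Ici (0:ℝ), HasDerivWithinAt f (g y) (Ici 0) y)
    (hode : ∀ y ∈ Ici (0:ℝ), g y = a * f y) :
    ∀ y ∈ Ici (0:ℝ), f y = f 0 * Real.exp (a * y) := by
  have hh : ∀ y ∈ Ici (0:ℝ), HasDerivWithinAt (fun y => f y * Real.exp (-a * y)) 0 (Ici 0) y := by
    intro y hy
    have h1 : HasDerivAt (fun y : ℝ => Real.exp (-a * y)) (Real.exp (-a * y) * (-a * 1)) y :=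
      ((hasDerivAt_id y).const_mul (-a)).exp
    have := (hd y hy).mul h1.hasDerivWithinAt
    refine this.congr_deriv ?_
    rw [hode y hy]; ring
  have hdiff : DifferentiableOn ℝ (fun y => f y * Real.exp (-a * y)) (Ici 0) :=
    fun y hy => ((hh y hy).differentiableWithinAt)
  have hconst : ∀ y ∈ Ici (0:ℝ), f y * Real.exp (-a * y) = f 0 * Real.exp (-a * 0) := by
    intro y hy
    apply (convex_Ici (0:ℝ)).is_const_of_fderivWithin_eq_zero hdiff _ hy (self_mem_Ici)
    intro x hx
    exact ((hh x hx).hasFDerivWithinAt.fderivWithin (uniqueDiffOn_Ici 0 x hx)).trans (by ext; simp)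
  intro y hy
  have h2 := hconst y hy
  have h3 : Real.exp (-a * y) ≠ 0 := (Real.exp_pos _).ne'
  field_simp at h2
  simp only [mul_zero, neg_zero, Real.exp_zero, mul_one] at h2
  rw [← h2, mul_assoc, ← Real.exp_add]
  simp

/-- Stable-mode decomposition: if A = R Λ R⁻¹ is real-diagonalizable,
    V is differentiable on [0,∞), solves A·V′ = −(1/Kn)·V there and is
    bounded, then writing c = R⁻¹ V(0), the coefficients of the
    non-positive modes vanish and V is a superposition of the decaying
    exponential modes. -/
theorem stable_mode_decomposition
    (n : ℕ) (hn : 1 ≤ n)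
    (A R : Matrix (Fin n) (Fin n) ℝ) (lam : Fin n → ℝ)
    (hR : IsUnit R.det)
    (hA : A = R * Matrix.diagonal lam * R⁻¹)
    (Kn : ℝ) (hKn : 0 < Kn)
    (V V' : ℝ → (Fin n → ℝ))
    (hderiv : ∀ y, 0 ≤ y → HasDerivWithinAt V (V' y) (Set.Ici 0) y)
    (hode : ∀ y, 0 ≤ y → A.mulVec (V' y) = -(1 / Kn) • V y)
    (hbound : ∃ C : ℝ, ∀ y, 0 ≤ y → ‖V y‖ ≤ C) :
    (∀ i, lam i ≤ 0 → R⁻¹.mulVec (V 0) i = 0) ∧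
    (∀ y, 0 ≤ y → V y = fun j =>
      ∑ i ∈ Finset.univ.filter (fun i => 0 < lam i),
        R⁻¹.mulVec (V 0) i * Real.exp (-y / (Kn * lam i)) * R j i) := by
  obtain ⟨C, hC⟩ := hbound
  have hC0 : 0 ≤ C := le_trans (norm_nonneg _) (hC 0 le_rfl)
  have hRinv : R⁻¹ * R = 1 := Matrix.nonsing_inv_mul R hR
  have hRR : R * R⁻¹ = 1 := Matrix.mul_nonsing_inv R hR
  have hBA : R⁻¹ * A = Matrix.diagonal lam * R⁻¹ := by
    rw [hA, ← Matrix.mul_assoc, ← Matrix.mul_assoc, hRinv, Matrix.one_mul]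
  -- componentwise ODE
  have hcomp : ∀ y, 0 ≤ y → ∀ i,
      lam i * (R⁻¹.mulVec (V' y) i) = -(1 / Kn) * (R⁻¹.mulVec (V y) i) := by
    intro y hy i
    have h := congrArg (fun v => R⁻¹.mulVec v i) (hode y hy)
    simp only [Matrix.mulVec_mulVec] at h
    rw [hBA] at h
    rw [← Matrix.mulVec_mulVec, Matrix.mulVec_diagonal] at h
    simpa [Matrix.mulVec_smul, Matrix.mulVec_neg, smul_eq_mul] using h
  -- componentwise derivative
  have hWd : ∀ i, ∀ y ∈ Ici (0:ℝ),
      HasDerivWithinAt (fun y => R⁻¹.mulVec (V y) i) (R⁻¹.mulVec (V' y) i) (Ici 0) y := by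
    intro i y hy
    have L : (Fin n → ℝ) →L[ℝ] ℝ :=
      (ContinuousLinearMap.proj i).comp (Matrix.mulVecLin R⁻¹).toContinuousLinearMap
    exact (((ContinuousLinearMap.proj i).comp
      (Matrix.mulVecLin R⁻¹).toContinuousLinearMap).hasFDerivAt.comp_hasDerivWithinAt y
      (hderiv y hy))
  -- boundedness of components
  have hWb : ∀ i, ∀ y, 0 ≤ y → |R⁻¹.mulVec (V y) i| ≤ (∑ j, |R⁻¹ i j|) * C := by
    intro i y hy
    have h1 : R⁻¹.mulVec (V y) i = ∑ j, R⁻¹ i j * V y j := by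
      simp [Matrix.mulVec, dotProduct]
    rw [h1]
    calc |∑ j, R⁻¹ i j * V y j| ≤ ∑ j, |R⁻¹ i j * V y j| := Finset.abs_sum_le_sum_abs _ _
      _ ≤ ∑ j : Fin n, |R⁻¹ i j| * C := by
          apply Finset.sum_le_sum
          intro j _
          rw [abs_mul]
          exact mul_le_mul_of_nonneg_left
            (le_trans (norm_le_pi_norm (V y) j) (hC y hy)) (abs_nonneg _)
      _ = (∑ j, |R⁻¹ i j|) * C := by rw [Finset.sum_mul]
  -- key pointwise formula
  have key : ∀ i, ∀ y, 0 ≤ y → R⁻¹.mulVec (V y) i =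
      if 0 < lam i then R⁻¹.mulVec (V 0) i * Real.exp (-y / (Kn * lam i)) else 0 := by
    intro i
    by_cases h0 : lam i = 0
    · intro y hy
      rw [if_neg (by rw [h0]; exact lt_irrefl 0)]
      have h := hcomp y hy i
      rw [h0, zero_mul] at h
      have hKn' : (1 : ℝ) / Kn ≠ 0 := by positivity
      have : (1 / Kn) * (R⁻¹.mulVec (V y) i) = 0 := by linarith
      exact (mul_eq_zero.mp this).resolve_left hKn'
    · have hode' : ∀ y ∈ Ici (0:ℝ),
          R⁻¹.mulVec (V' y) i = (-(1 / (Kn * lam i))) * (R⁻¹.mulVec (V y) i) := by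
        intro y hy
        have h := hcomp y hy
        have h2 := h i
        field_simp at h2 ⊢
        linarith [h2]
      have hexp := scalar_ode_exp (fun y => R⁻¹.mulVec (V y) i)
        (fun y => R⁻¹.mulVec (V' y) i) (-(1 / (Kn * lam i))) (hWd i) hode'
      beta_reduce at hexp
      rcases lt_or_gt_of_ne h0 with hneg | hpos
      · -- negative eigenvalue: coefficient vanishes
        have ha : 0 < -(1 / (Kn * lam i)) := by
          have h1 : Kn * lam i < 0 := mul_neg_of_pos_of_neg hKn hneg
          have h2 := div_neg_of_pos_of_neg one_pos h1
          linarith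
        have hzero : R⁻¹.mulVec (V 0) i = 0 := by
          by_contra hne
          have hpos0 : 0 < |R⁻¹.mulVec (V 0) i| := abs_pos.mpr hne
          have hlim : Filter.Tendsto
              (fun y => |R⁻¹.mulVec (V 0) i| * Real.exp (-(1 / (Kn * lam i)) * y))
              Filter.atTop Filter.atTop := by
            apply Filter.Tendsto.const_mul_atTop hpos0
            exact Real.tendsto_exp_atTop.comp (Filter.Tendsto.const_mul_atTop ha Filter.tendsto_id)
          obtain ⟨y, hy1, hy2⟩ :=
            ((hlim.eventually_gt_atTop ((∑ j, |R⁻¹ i j|) * C)).and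
              (Filter.eventually_ge_atTop 0)).exists
          have hb := hWb i y hy2
          rw [hexp y hy2, abs_mul, Real.abs_exp] at hb
          exact absurd hb (not_le.mpr hy1)
        intro y hy
        rw [if_neg (not_lt.mpr hneg.le), hexp y hy, hzero, zero_mul]
      · intro y hy
        rw [if_pos hpos, hexp y hy]
        congr 1
        rw [Real.exp_eq_exp]
        field_simp
  refine ⟨?_, ?_⟩
  · intro i hle
    have h := key i 0 le_rfl
    rwa [if_neg (not_lt.mpr hle)] at h
  · intro y hy
    funext j
    have hVj : V y = R.mulVec (R⁻¹.mulVec (V y)) := by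
      rw [Matrix.mulVec_mulVec, hRR, Matrix.one_mulVec]
    calc V y j = ∑ i, R j i * R⁻¹.mulVec (V y) i := by
          conv_lhs => rw [hVj]
          simp [Matrix.mulVec, dotProduct]
      _ = ∑ i, R j i * (if 0 < lam i then
            R⁻¹.mulVec (V 0) i * Real.exp (-y / (Kn * lam i)) else 0) := by
          exact Finset.sum_congr rfl fun i _ => by rw [key i y hy]
      _ = ∑ i ∈ Finset.univ.filter (fun i => 0 < lam i),
            R⁻¹.mulVec (V 0) i * Real.exp (-y / (Kn * lam i)) * R j i := by
          rw [Finset.sum_filter]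
          refine Finset.sum_congr rfl fun i _ => ?_
          split_ifs with h
          · ring
          · rw [mul_zero]
end
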